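/- For n ≥ 3, the number of permutations of length n that avoid the pattern 123 and contain exactly one occurrence of the pattern 132 is (n-2)·2^(n-3). -/

import Mathlib

open Finset

namespace Stmt8Aux

variable {n : ℕ}


def Uset (π : Equiv.Perm (Fin n)) (i : Fin n) : Finset (Fin n) :=
  Finset.univ.filter fun j => i < j ∧ π i < π j

lemma mem_Uset {π : Equiv.Perm (Fin n)} {i j : Fin n} :
    j ∈ Uset π i ↔ i < j ∧ π i < π j := by
  simp [Uset]

def U (π : Equiv.Perm (Fin n)) (i : Fin n) : ℕ := (Uset π i).card



lemma U_eq_count_image (π : Equiv.Perm (Fin n)) (i : Fin n) :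
    U π i = (((Finset.univ.filter fun j => i ≤ j).image π).filter fun v => π i < v).card := by
  rw [U, Uset, ← Finset.card_image_of_injective _ π.injective]
  congr 1
  ext v
  simp only [Finset.mem_image, Finset.mem_filter, Finset.mem_univ, true_and]
  constructor
  · rintro ⟨j, ⟨hij, hv⟩, rfl⟩
    exact ⟨⟨j, le_of_lt hij, rfl⟩, hv⟩
  · rintro ⟨⟨j, hij, rfl⟩, hv⟩
    refine ⟨j, ⟨?_, hv⟩, rfl⟩
    rcases lt_or_eq_of_le hij with h | h
    · exact h
    · subst h; exact absurd hv (lt_irrefl _)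

lemma U_injective (π σ : Equiv.Perm (Fin n)) (hU : ∀ i, U π i = U σ i) : π = σ := by
  have key : ∀ m : ℕ, ∀ i : Fin n, (i : ℕ) = m → π i = σ i := by
    intro m
    induction m using Nat.strong_induction_on with
    | _ m IH =>
      intro i him
      have IH' : ∀ j : Fin n, j < i → π j = σ j := by
        intro j hj
        exact IH j.val (him ▸ hj) j rfl
      have hS : (Finset.univ.filter fun j => i ≤ j).image π
          = (Finset.univ.filter fun j => i ≤ j).image σ := by
        have h1 : (Finset.univ.filter fun j : Fin n => i ≤ j)
            = Finset.univ \ (Finset.univ.filter fun j : Fin n => j < i) := by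
          ext j
          simp [not_lt]
        rw [h1, Finset.image_sdiff _ _ π.injective, Finset.image_sdiff _ _ σ.injective,
          Finset.image_univ_equiv π, Finset.image_univ_equiv σ]
        congr 1
        apply Finset.image_congr
        intro j hj
        simp only [Finset.mem_coe, Finset.mem_filter] at hj
        exact IH' j hj.2
      have e1 := U_eq_count_image π i
      have e2 := U_eq_count_image σ i
      rw [← hS] at e2
      set S := (Finset.univ.filter fun j => i ≤ j).image π with hSdef
      have hπi : π i ∈ S := Finset.mem_image_of_mem π (by simp)
      have hσi : σ i ∈ S := by
        rw [hS]; exact Finset.mem_image_of_mem σ (by simp)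
      have hcount : (S.filter fun v => π i < v).card = (S.filter fun v => σ i < v).card := by
        rw [← e1, ← e2, hU]
      have anti : ∀ a b : Fin n, a ∈ S → b ∈ S → a < b →
          (S.filter fun v => b < v).card < (S.filter fun v => a < v).card := by
        intro a b ha hb hab
        apply Finset.card_lt_card
        constructor
        · intro v hv
          simp only [Finset.mem_filter] at hv ⊢
          exact ⟨hv.1, lt_trans hab hv.2⟩
        · intro hsub
          have hbmem : b ∈ S.filter fun v => a < v := by
            simp only [Finset.mem_filter]; exact ⟨hb, hab⟩
          have := hsub hbmem
          simp only [Finset.mem_filter] at this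
          exact absurd this.2 (lt_irrefl _)
      rcases lt_trichotomy (π i) (σ i) with hlt | he | hgt
      · have := anti _ _ hπi hσi hlt
        omega
      · exact he
      · have := anti _ _ hσi hπi hgt
        omega
  exact Equiv.ext fun i => key i.val i rfl

def Q (i₀ : ℕ) (i : Fin n) (x : Fin (n - i.val)) : Prop :=
  if (i : ℕ) = i₀ then (x : ℕ) = 2
  else if (i : ℕ) = i₀ + 1 then (x : ℕ) = 0
  else (x : ℕ) ≤ 1

instance (i₀ : ℕ) (i : Fin n) : DecidablePred (Q (n := n) i₀ i) := fun x => by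
  unfold Q; infer_instance

lemma card_val_eq (m k : ℕ) : Fintype.card {x : Fin m // (x : ℕ) = k} = if k < m then 1 else 0 := by
  split_ifs with h
  · rw [Fintype.card_eq_one_iff]
    exact ⟨⟨⟨k, h⟩, rfl⟩, fun y => Subtype.ext (Fin.ext y.2)⟩
  · rw [Fintype.card_eq_zero_iff]
    exact ⟨fun x => absurd (x.2 ▸ x.1.isLt) h⟩

lemma card_val_le1 (m : ℕ) : Fintype.card {x : Fin m // (x : ℕ) ≤ 1} = min 2 m := by
  classical
  rw [Fintype.card_subtype]
  match m with
  | 0 => simp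
  | 1 =>
    have : (univ.filter fun x : Fin 1 => (x : ℕ) ≤ 1) = univ := by
      ext x
      simp
    rw [this]; simp
  | (m+2) =>
    have : (univ.filter fun x : Fin (m+2) => (x : ℕ) ≤ 1) = {⟨0, by omega⟩, ⟨1, by omega⟩} := by
      ext x
      simp only [Finset.mem_filter, Finset.mem_univ, true_and, Finset.mem_insert,
        Finset.mem_singleton, Fin.ext_iff, Fin.val_mk]
      omega
    rw [this]
    rw [Finset.card_insert_of_notMem (by simp [Fin.ext_iff]), Finset.card_singleton]
    omega

lemma card_filter_lt (k : ℕ) (h : k < n) :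
    (univ.filter fun i : Fin n => (i : ℕ) < k).card = k := by
  have : (univ.filter fun i : Fin n => (i : ℕ) < k) = Finset.Iio ⟨k, h⟩ := by
    ext x; simp [Fin.lt_def]
  rw [this, Fin.card_Iio]

-- the per-i₀ count
lemma card_P (hn : 3 ≤ n) (i₀ : Fin n) :
    Fintype.card {c : ∀ i : Fin n, Fin (n - i.val) // ∀ i, Q (i₀ : ℕ) i (c i)} =
      if (i₀ : ℕ) < n - 2 then 2 ^ (n - 3) else 0 := by
  classical
  rw [Fintype.card_congr (Equiv.subtypePiEquivPi (p := fun i x => Q (i₀ : ℕ) i x)),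
    Fintype.card_pi]
  have hcard : ∀ i : Fin n, Fintype.card {x : Fin (n - i.val) // Q (i₀ : ℕ) i x} =
      if (i : ℕ) = i₀ then (if 2 < n - (i₀ : ℕ) then 1 else 0)
      else if (i : ℕ) = (i₀ : ℕ) + 1 then 1
      else min 2 (n - (i : ℕ)) := by
    intro i
    by_cases h1 : (i : ℕ) = i₀
    · rw [if_pos h1]
      have : ∀ x : Fin (n - i.val), Q (i₀ : ℕ) i x ↔ (x : ℕ) = 2 := by
        intro x; rw [Q, if_pos h1]
      rw [Fintype.card_congr (Equiv.subtypeEquivRight this), card_val_eq, h1]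
    · rw [if_neg h1]
      by_cases h2 : (i : ℕ) = (i₀ : ℕ) + 1
      · rw [if_pos h2]
        have : ∀ x : Fin (n - i.val), Q (i₀ : ℕ) i x ↔ (x : ℕ) = 0 := by
          intro x; rw [Q, if_neg h1, if_pos h2]
        rw [Fintype.card_congr (Equiv.subtypeEquivRight this), card_val_eq]
        have : (0:ℕ) < n - (i:ℕ) := by have := i.isLt; omega
        rw [if_pos this]
      · rw [if_neg h2]
        have : ∀ x : Fin (n - i.val), Q (i₀ : ℕ) i x ↔ (x : ℕ) ≤ 1 := by
          intro x; rw [Q, if_neg h1, if_neg h2]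
        rw [Fintype.card_congr (Equiv.subtypeEquivRight this), card_val_le1]
  rw [Finset.prod_congr rfl (fun i _ => hcard i)]
  by_cases hgood : (i₀ : ℕ) < n - 2
  · rw [if_pos hgood]
    have hx1 : (i₀ : ℕ) + 1 < n := by omega
    have hlast : n - 1 < n := by omega
    set x₁ : Fin n := ⟨(i₀ : ℕ) + 1, hx1⟩ with hx₁def
    set lst : Fin n := ⟨n - 1, hlast⟩ with hlstdef
    have hsub : ({i₀, x₁, lst} : Finset (Fin n)) ⊆ univ := Finset.subset_univ _
    rw [← Finset.prod_sdiff hsub]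
    have h3distinct : (({i₀, x₁, lst} : Finset (Fin n))).card = 3 := by
      rw [Finset.card_insert_of_notMem (by simp [Fin.ext_iff, hx₁def, hlstdef]; omega),
        Finset.card_insert_of_notMem (by simp [Fin.ext_iff, hx₁def, hlstdef]; omega),
        Finset.card_singleton]
    have hprod1 : (∏ i ∈ ({i₀, x₁, lst} : Finset (Fin n)),
        (if (i : ℕ) = i₀ then (if 2 < n - (i₀ : ℕ) then 1 else 0)
        else if (i : ℕ) = (i₀ : ℕ) + 1 then 1
        else min 2 (n - (i : ℕ)))) = 1 := by
      apply Finset.prod_eq_one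
      intro i hi
      simp only [Finset.mem_insert, Finset.mem_singleton] at hi
      rcases hi with h | h | h
      · have h1 : (i : ℕ) = (i₀ : ℕ) := by rw [h]
        have h2 : 2 < n - (i₀ : ℕ) := by omega
        rw [if_pos h1, if_pos h2]
      · have h1 : (i : ℕ) = (i₀ : ℕ) + 1 := by rw [h]
        rw [if_neg (by omega), if_pos h1]
      · have h1 : (i : ℕ) = n - 1 := by rw [h]
        rw [if_neg (by omega), if_neg (by omega)]
        show min 2 (n - (i : ℕ)) = 1
        omega
    have hprod2 : (∏ i ∈ univ \ ({i₀, x₁, lst} : Finset (Fin n)),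
        (if (i : ℕ) = i₀ then (if 2 < n - (i₀ : ℕ) then 1 else 0)
        else if (i : ℕ) = (i₀ : ℕ) + 1 then 1
        else min 2 (n - (i : ℕ)))) = 2 ^ (n - 3) := by
      rw [Finset.prod_congr rfl (g := fun _ => 2) ?_, Finset.prod_const]
      · congr 1
        rw [Finset.card_sdiff_of_subset hsub, h3distinct, Finset.card_univ, Fintype.card_fin]
      · intro i hi
        simp only [Finset.mem_sdiff, Finset.mem_univ, true_and, Finset.mem_insert,
          Finset.mem_singleton] at hi
        push_neg at hi
        obtain ⟨hne1, hne2, hne3⟩ := hi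
        rw [if_neg (fun h => hne1 (Fin.ext h)),
          if_neg (fun h => hne2 (Fin.ext (by simp [hx₁def, h])))]
        have h4 : (i : ℕ) ≠ n - 1 := fun h => hne3 (Fin.ext (by simp [hlstdef, h]))
        have h5 := i.isLt
        show min 2 (n - (i : ℕ)) = 2
        omega
    rw [hprod1, hprod2, mul_one]
  · rw [if_neg hgood]
    apply Finset.prod_eq_zero (Finset.mem_univ i₀)
    rw [if_pos rfl, if_neg (by omega)]

lemma card_codes (hn : 3 ≤ n) :
    Nat.card {c : ∀ i : Fin n, Fin (n - i.val) // ∃ i₀ : Fin n, ∀ i, Q (i₀ : ℕ) i (c i)} =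
      (n - 2) * 2 ^ (n - 3) := by
  classical
  rw [Nat.card_eq_fintype_card, Fintype.card_subtype]
  have split : (univ.filter fun c : ∀ i : Fin n, Fin (n - i.val) =>
        ∃ i₀ : Fin n, ∀ i, Q (i₀ : ℕ) i (c i))
      = univ.biUnion (fun i₀ : Fin n =>
          univ.filter fun c : ∀ i : Fin n, Fin (n - i.val) => ∀ i, Q (i₀ : ℕ) i (c i)) := by
    ext c
    simp
  rw [split, Finset.card_biUnion]
  · have hcount : ∀ i₀ : Fin n,
        (univ.filter fun c : ∀ i : Fin n, Fin (n - i.val) => ∀ i, Q (i₀ : ℕ) i (c i)).card =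
        if (i₀ : ℕ) < n - 2 then 2 ^ (n - 3) else 0 := by
      intro i₀
      rw [← Fintype.card_subtype]
      exact card_P hn i₀
    rw [Finset.sum_congr rfl (fun i₀ _ => hcount i₀), ← Finset.sum_filter,
      Finset.sum_const, card_filter_lt (n - 2) (by omega), smul_eq_mul]
  · intro x _ y _ hxy
    apply Finset.disjoint_left.mpr
    intro c hc1 hc2
    simp only [Finset.mem_filter, Finset.mem_univ, true_and] at hc1 hc2
    have e1 := hc1 x
    have e2 := hc2 x
    unfold Q at e1 e2
    rw [if_pos rfl] at e1
    have hne : (x : ℕ) ≠ (y : ℕ) := fun h => hxy (Fin.ext h)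
    rw [if_neg hne] at e2
    split_ifs at e2 <;> omega
lemma good_iff' (π : Equiv.Perm (Fin n)) :
    ((¬ ∃ i j k : Fin n, i < j ∧ j < k ∧ π i < π j ∧ π j < π k) ∧
      (∃! t : Fin n × Fin n × Fin n,
        t.1 < t.2.1 ∧ t.2.1 < t.2.2 ∧ π t.1 < π t.2.2 ∧ π t.2.2 < π t.2.1)) ↔
    ∃ i₀ : Fin n, U π i₀ = 2 ∧ (∀ i : Fin n, (i : ℕ) = (i₀ : ℕ) + 1 → U π i = 0) ∧
      (∀ i : Fin n, i ≠ i₀ → U π i ≤ 1) := by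
  constructor
  · rintro ⟨h123, ⟨⟨i, j, k⟩, ht, hu⟩⟩
    obtain ⟨hij, hjk, hv1, hv2⟩ := ht
    simp only at hij hjk hv1 hv2
    have hu' : ∀ a b c : Fin n, a < b → b < c → π a < π c → π c < π b →
        a = i ∧ b = j ∧ c = k := by
      intro a b c h1 h2 h3 h4
      have := hu (a, b, c) ⟨h1, h2, h3, h4⟩
      simpa [Prod.ext_iff] using this
    -- main claim
    have claim : ∀ (i' a b : Fin n), a ∈ Uset π i' → b ∈ Uset π i' → a < b →
        i' = i ∧ a = j ∧ b = k := by
      intro i' a b ha hb hab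
      rw [mem_Uset] at ha hb
      rcases lt_trichotomy (π a) (π b) with hv | hv | hv
      · exact absurd ⟨i', a, b, ha.1, hab, ha.2, hv⟩ h123
      · exact absurd (π.injective hv) (ne_of_lt hab)
      · exact hu' i' a b ha.1 hab hb.2 hv
    have hjmem : j ∈ Uset π i := mem_Uset.mpr ⟨hij, lt_trans hv1 hv2⟩
    have hkmem : k ∈ Uset π i := mem_Uset.mpr ⟨lt_trans hij hjk, hv1⟩
    have hUset : Uset π i = {j, k} := by
      apply Finset.Subset.antisymm
      · intro x hx
        have hx' := mem_Uset.mp hx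
        simp only [Finset.mem_insert, Finset.mem_singleton]
        rcases lt_trichotomy x j with h | h | h
        · exact absurd (claim i x j hx hjmem h).2.1 (ne_of_lt h)
        · exact Or.inl h
        · rcases lt_trichotomy x k with h2 | h2 | h2
          · exact absurd (claim i j x hjmem hx h).2.2 (ne_of_lt h2)
          · exact Or.inr h2
          · exact absurd ((claim i k x hkmem hx h2).2.1 ▸ hjk) (lt_irrefl _)
      · intro x hx
        simp only [Finset.mem_insert, Finset.mem_singleton] at hx
        rcases hx with rfl | rfl
        · exact hjmem
        · exact hkmem
    have hU2 : U π i = 2 := by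
      rw [U, hUset]
      rw [Finset.card_insert_of_notMem (by simp [ne_of_lt hjk]), Finset.card_singleton]
    -- j is at position i+1
    have hjval : (j : ℕ) = (i : ℕ) + 1 := by
      by_contra hne
      have hlt : (i : ℕ) + 1 < (j : ℕ) := by
        have := hij
        rw [Fin.lt_def] at this
        omega
      have hx1lt : (i : ℕ) + 1 < n := lt_trans hlt j.isLt
      set x : Fin n := ⟨(i : ℕ) + 1, hx1lt⟩ with hxdef
      have hix : i < x := by rw [Fin.lt_def]; simp [hxdef]
      have hxj : x < j := by rw [Fin.lt_def]; simpa [hxdef] using hlt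
      have hxi : x ≠ i := ne_of_gt hix
      have hπx : π x < π i := by
        rcases lt_trichotomy (π x) (π i) with h | h | h
        · exact h
        · exact absurd (π.injective h) hxi
        · have : x ∈ Uset π i := mem_Uset.mpr ⟨hix, h⟩
          rw [hUset] at this
          simp only [Finset.mem_insert, Finset.mem_singleton] at this
          rcases this with rfl | rfl
          · exact absurd hxj (lt_irrefl _)
          · exact absurd (lt_trans hxj hjk) (lt_irrefl _)
      have h132 : π x < π k ∧ π k < π j := ⟨lt_trans hπx hv1, hv2⟩
      have := (hu' x j k hxj hjk h132.1 h132.2).1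
      exact absurd (this ▸ hix) (lt_irrefl _)
    refine ⟨i, hU2, ?_, ?_⟩
    · intro i' hi'
      have : i' = j := Fin.ext (by omega)
      subst this
      rw [U, Finset.card_eq_zero]
      ext y
      simp only [Finset.notMem_empty, iff_false]
      intro hy
      rw [mem_Uset] at hy
      have : y ∈ Uset π i := mem_Uset.mpr ⟨lt_trans hij hy.1, lt_trans (lt_trans hv1 hv2) hy.2⟩
      rw [hUset] at this
      simp only [Finset.mem_insert, Finset.mem_singleton] at this
      rcases this with rfl | rfl
      · exact absurd hy.1 (lt_irrefl _)
      · exact absurd (lt_trans hv2 hy.2) (lt_irrefl _)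
    · intro i' hi'
      by_contra h
      push_neg at h
      rw [U] at h
      obtain ⟨a, ha, b, hb, hab⟩ := Finset.one_lt_card.mp h
      rcases lt_trichotomy a b with hlt | heq | hgt
      · exact hi' (claim i' a b ha hb hlt).1
      · exact hab heq
      · exact hi' (claim i' b a hb ha hgt).1
  · rintro ⟨i₀, hU2, hUnext, hUle⟩
    obtain ⟨a, b, hab, hset⟩ := Finset.card_eq_two.mp hU2
    -- wlog a < b
    have hwlog : ∃ a b : Fin n, a < b ∧ Uset π i₀ = {a, b} := by
      rcases lt_trichotomy a b with h | h | h
      · exact ⟨a, b, h, hset⟩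
      · exact absurd h hab
      · exact ⟨b, a, h, by rw [hset, Finset.pair_comm]⟩
    clear hset hab
    obtain ⟨a, b, hab, hset⟩ := hwlog
    have hamem : a ∈ Uset π i₀ := by rw [hset]; simp
    have hbmem : b ∈ Uset π i₀ := by rw [hset]; simp
    rw [mem_Uset] at hamem hbmem
    have hx1lt : (i₀ : ℕ) + 1 < n := by
      have h1 : (i₀ : ℕ) < (a : ℕ) := hamem.1
      have h2 : (a : ℕ) < (b : ℕ) := hab
      have := b.isLt
      omega
    set x₁ : Fin n := ⟨(i₀ : ℕ) + 1, hx1lt⟩ with hx₁def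
    have hUx₁ : U π x₁ = 0 := hUnext x₁ rfl
    have hUsetx₁ : Uset π x₁ = ∅ := Finset.card_eq_zero.mp hUx₁
    have hi₀x₁ : i₀ < x₁ := by rw [Fin.lt_def]; simp [hx₁def]
    -- a = x₁
    have hax₁ : a = x₁ := by
      by_contra hne
      have hx₁a : x₁ < a := by
        have h1 : (i₀ : ℕ) < (a : ℕ) := hamem.1
        have h2 : (x₁ : ℕ) = (i₀ : ℕ) + 1 := rfl
        have h3 : (x₁ : ℕ) ≠ (a : ℕ) := fun h => hne (Fin.ext h).symm
        rw [Fin.lt_def]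
        omega
      have hπx₁ : π x₁ < π i₀ := by
        rcases lt_trichotomy (π x₁) (π i₀) with h | h | h
        · exact h
        · exact absurd (π.injective h) (ne_of_gt hi₀x₁)
        · have : x₁ ∈ Uset π i₀ := mem_Uset.mpr ⟨hi₀x₁, h⟩
          rw [hset] at this
          simp only [Finset.mem_insert, Finset.mem_singleton] at this
          rcases this with rfl | rfl
          · exact absurd hx₁a (lt_irrefl _)
          · exact absurd (lt_trans hx₁a hab) (lt_irrefl _)
      have : a ∈ Uset π x₁ := mem_Uset.mpr ⟨hx₁a, lt_trans hπx₁ hamem.2⟩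
      rw [hUsetx₁] at this
      exact absurd this (Finset.notMem_empty _)
    -- π b < π a
    have hπba : π b < π a := by
      rcases lt_trichotomy (π b) (π a) with h | h | h
      · exact h
      · exact absurd (π.injective h) (ne_of_gt hab)
      · have : b ∈ Uset π x₁ := mem_Uset.mpr ⟨hax₁ ▸ hab, hax₁ ▸ h⟩
        rw [hUsetx₁] at this
        exact absurd this (Finset.notMem_empty _)
    -- the unique pair lemma
    have pairmem : ∀ x y z : Fin n, x < y → y < z → π x < π y → π x < π z →
        x = i₀ ∧ y = a ∧ z = b := by
      intro x y z hxy hyz hv1 hv2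
      have hymem : y ∈ Uset π x := mem_Uset.mpr ⟨hxy, hv1⟩
      have hzmem : z ∈ Uset π x := mem_Uset.mpr ⟨lt_trans hxy hyz, hv2⟩
      have hx : x = i₀ := by
        by_contra hne
        have h2 : 2 ≤ U π x := Finset.one_lt_card.mpr ⟨y, hymem, z, hzmem, ne_of_lt hyz⟩
        have := hUle x hne
        omega
      subst hx
      rw [hset] at hymem hzmem
      simp only [Finset.mem_insert, Finset.mem_singleton] at hymem hzmem
      rcases hymem with rfl | rfl
      · rcases hzmem with rfl | rfl
        · exact absurd hyz (lt_irrefl _)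
        · exact ⟨rfl, rfl, rfl⟩
      · rcases hzmem with rfl | rfl
        · exact absurd (lt_trans hyz hab) (lt_irrefl _)
        · exact absurd hyz (lt_irrefl _)
    constructor
    · rintro ⟨x, y, z, hxy, hyz, hv1, hv2⟩
      obtain ⟨hx, hy, hz⟩ := pairmem x y z hxy hyz hv1 (lt_trans hv1 hv2)
      subst hx; subst hy; subst hz
      exact absurd (lt_trans hv2 hπba) (lt_irrefl _)
    · refine ⟨(i₀, a, b), ⟨hamem.1, hab, hbmem.2, hπba⟩, ?_⟩
      rintro ⟨x, y, z⟩ ⟨hxy, hyz, hv1, hv2⟩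
      simp only at hxy hyz hv1 hv2
      obtain ⟨hx, hy, hz⟩ := pairmem x y z hxy hyz (lt_trans hv1 hv2) hv1
      simp [hx, hy, hz]

lemma U_lt (π : Equiv.Perm (Fin n)) (i : Fin n) : U π i < n - i.val := by
  have h1 : Uset π i ⊆ Finset.Ioi i := by
    intro j hj
    rw [mem_Uset] at hj
    simpa using hj.1
  have h2 := Finset.card_le_card h1
  rw [Fin.card_Ioi] at h2
  have h3 : (i : ℕ) < n := i.isLt
  rw [U]
  omega

def code (π : Equiv.Perm (Fin n)) : ∀ i : Fin n, Fin (n - i.val) :=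
  fun i => ⟨U π i, U_lt π i⟩

lemma code_injective : Function.Injective (code (n := n)) := by
  intro π σ h
  exact U_injective π σ fun i => congrArg Fin.val (congrFun h i)

lemma code_bijective : Function.Bijective (code (n := n)) := by
  rw [Fintype.bijective_iff_injective_and_card]
  refine ⟨code_injective, ?_⟩
  rw [Fintype.card_perm, Fintype.card_pi]
  simp only [Fintype.card_fin]
  rw [Fin.prod_univ_eq_prod_range (fun i => n - i) n]
  rw [← Finset.prod_range_add_one_eq_factorial, ← Finset.prod_range_reflect]
  apply Finset.prod_congr rfl
  intro i hi
  simp only [Finset.mem_range] at hi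
  omega

lemma Q_iff (π : Equiv.Perm (Fin n)) (i₀ : Fin n) :
    (∀ i, Q (i₀ : ℕ) i (code π i)) ↔
    (U π i₀ = 2 ∧ (∀ i : Fin n, (i : ℕ) = (i₀ : ℕ) + 1 → U π i = 0) ∧
      ∀ i : Fin n, i ≠ i₀ → U π i ≤ 1) := by
  have hcode : ∀ i, ((code π i : Fin (n - i.val)) : ℕ) = U π i := fun i => rfl
  constructor
  · intro h
    refine ⟨?_, ?_, ?_⟩
    · have := h i₀
      rw [Q, if_pos rfl] at this
      exact this
    · intro i hi
      have := h i
      rw [Q, if_neg (by omega), if_pos hi] at this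
      exact this
    · intro i hne
      have := h i
      rw [Q] at this
      split_ifs at this with h1 h2
      · exact absurd (Fin.ext h1) hne
      · have h3 : U π i = 0 := this
        omega
      · exact this
  · rintro ⟨h2, h0, hle⟩
    intro i
    rw [Q]
    split_ifs with hi1 hi2
    · have hii : i = i₀ := Fin.ext hi1
      rw [hcode, hii]
      exact h2
    · rw [hcode]
      exact h0 i hi2
    · rw [hcode]
      exact hle i (fun h => hi1 (by rw [h]))

lemma good_iff (π : Equiv.Perm (Fin n)) :
    ((¬ ∃ i j k : Fin n, i < j ∧ j < k ∧ π i < π j ∧ π j < π k) ∧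
      (∃! t : Fin n × Fin n × Fin n,
        t.1 < t.2.1 ∧ t.2.1 < t.2.2 ∧ π t.1 < π t.2.2 ∧ π t.2.2 < π t.2.1)) ↔
    ∃ i₀ : Fin n, ∀ i, Q (i₀ : ℕ) i (code π i) :=
  (good_iff' π).trans (exists_congr fun i₀ => (Q_iff π i₀).symm)

end Stmt8Aux

/-- For `n ≥ 3`, the number of permutations of length `n` avoiding the pattern 123
and containing exactly one occurrence of the pattern 132 is `(n-2)·2^(n-3)`. -/
theorem stmt8 (n : ℕ) (hn : 3 ≤ n) :
    Nat.card {π : Equiv.Perm (Fin n) //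
      (¬ ∃ i j k : Fin n, i < j ∧ j < k ∧ π i < π j ∧ π j < π k) ∧
      (∃! t : Fin n × Fin n × Fin n,
        t.1 < t.2.1 ∧ t.2.1 < t.2.2 ∧ π t.1 < π t.2.2 ∧ π t.2.2 < π t.2.1)} =
    (n - 2) * 2 ^ (n - 3) := by
  classical
  rw [← Stmt8Aux.card_codes hn]
  exact Nat.card_congr <| Equiv.subtypeEquiv (Equiv.ofBijective _ Stmt8Aux.code_bijective)
    (fun π => Stmt8Aux.good_iff π)
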